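/- Lower bound for the A-Hessian norm: for a symmetric n×n matrix H, unit vector e = e₁ (first standard basis vector), and p ≥ 2, one has |H|_A² ≥ (p-1)² H₁₁² + 2(p-1) Σ_{k=2}^n H_{1k}² + (1/(n-1)) (Σ_{j=2}^n H_{jj})² whenever n ≥ 2. -/

import Mathlib

open Finset

theorem hessian_A_norm_lower_bound (n : ℕ) [NeZero n] (hn : 2 ≤ n) (p : ℝ) (hp : 2 ≤ p)
    (H : Matrix (Fin n) (Fin n) ℝ) (hH : H.IsSymm)
    (A : Matrix (Fin n) (Fin n) ℝ)
    (hA : ∀ i j, A i j = (if i = j then (1:ℝ) else 0) +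
      (p - 2) * (if i = 0 then (1:ℝ) else 0) * (if j = 0 then (1:ℝ) else 0)) :
    ∑ i, ∑ j, ∑ k, ∑ l, A i k * A j l * H i j * H k l ≥
      (p - 1) ^ 2 * H 0 0 ^ 2 +
        2 * (p - 1) * ∑ k ∈ Finset.univ.erase 0, H 0 k ^ 2 +
          (1 / ((n : ℝ) - 1)) * (∑ j ∈ Finset.univ.erase 0, H j j) ^ 2 := by
  have hsym : ∀ i j, H j i = H i j := fun i j => hH.apply i j
  have key : ∑ i, ∑ j, ∑ k, ∑ l, A i k * A j l * H i j * H k l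
      = (∑ i, ∑ j, H i j ^ 2) + (p-2)^2 * H 0 0 ^ 2
        + (p-2) * (∑ k, H 0 k ^ 2) + (p-2) * (∑ i, H i 0 ^ 2) := by
    simp only [hA, add_mul, mul_add, ite_mul, mul_ite, one_mul, mul_one, zero_mul, mul_zero,
      Finset.sum_add_distrib, Finset.sum_ite_eq, Finset.sum_ite_eq', Finset.mem_univ, if_true,
      Finset.sum_ite_irrel, Finset.sum_const_zero, add_zero, zero_add]
    ring_nf
    simp only [add_mul, sub_mul, neg_mul, Finset.sum_add_distrib, Finset.sum_sub_distrib,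
      mul_assoc, Finset.sum_neg_distrib, ← Finset.mul_sum, pow_two]
    ring_nf
    simp only [← Finset.sum_mul]
  set S := Finset.univ.erase (0 : Fin n) with hS
  have h0S : (0 : Fin n) ∉ S := Finset.notMem_erase _ _
  have hrow0 : ∑ k, H 0 k ^ 2 = H 0 0 ^ 2 + ∑ k ∈ S, H 0 k ^ 2 :=
    (Finset.add_sum_erase _ _ (Finset.mem_univ 0)).symm
  have hcol0 : ∑ i, H i 0 ^ 2 = H 0 0 ^ 2 + ∑ i ∈ S, H 0 i ^ 2 := by
    have : ∑ i, H i 0 ^ 2 = ∑ i, H 0 i ^ 2 := by simp [hsym]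
    rw [this, hrow0]
  have hsplit : ∑ i, ∑ j, H i j ^ 2
      = H 0 0 ^ 2 + 2 * (∑ k ∈ S, H 0 k ^ 2) + ∑ i ∈ S, ∑ j ∈ S, H i j ^ 2 := by
    rw [← Finset.add_sum_erase _ _ (Finset.mem_univ (0 : Fin n)), ← hS, hrow0]
    have : ∀ i ∈ S, ∑ j, H i j ^ 2 = H i 0 ^ 2 + ∑ j ∈ S, H i j ^ 2 := fun i _ =>
      (Finset.add_sum_erase _ _ (Finset.mem_univ 0)).symm
    rw [Finset.sum_congr rfl this, Finset.sum_add_distrib]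
    have : ∑ i ∈ S, H i 0 ^ 2 = ∑ i ∈ S, H 0 i ^ 2 := by simp [hsym]
    rw [this]; ring
  have hdiag : ∑ i ∈ S, H i i ^ 2 ≤ ∑ i ∈ S, ∑ j ∈ S, H i j ^ 2 :=
    Finset.sum_le_sum fun i hi =>
      Finset.single_le_sum (fun j _ => sq_nonneg (H i j)) hi
  have hcard : (S.card : ℝ) = (n : ℝ) - 1 := by
    rw [hS, Finset.card_erase_of_mem (Finset.mem_univ 0), Finset.card_univ, Fintype.card_fin]
    have h1 : 1 ≤ n := le_trans one_le_two hn
    push_cast [Nat.cast_sub h1]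
    ring
  have hn1 : (0 : ℝ) < (n : ℝ) - 1 := by
    have : (2 : ℝ) ≤ (n : ℝ) := by exact_mod_cast hn
    linarith
  have hcs : (∑ i ∈ S, H i i) ^ 2 ≤ ((n : ℝ) - 1) * ∑ i ∈ S, H i i ^ 2 := by
    have := sq_sum_le_card_mul_sum_sq (s := S) (f := fun i => H i i)
    rwa [hcard] at this
  have hdiv : (1 / ((n : ℝ) - 1)) * (∑ i ∈ S, H i i) ^ 2 ≤ ∑ i ∈ S, H i i ^ 2 := by
    rw [one_div, inv_mul_le_iff₀ hn1]
    linarith [hcs]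
  have hb : 0 ≤ ∑ k ∈ S, H 0 k ^ 2 := Finset.sum_nonneg fun k _ => sq_nonneg _
  rw [ge_iff_le, key, hrow0, hcol0, hsplit]
  nlinarith [hdiag, hdiv, hb, sq_nonneg (H 0 0)]
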